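/- Let f be the unique raked trigonometric polynomial of degree at most 2k-1 with constant term 1 having a root of multiplicity 2m at t = 0 and a root of multiplicity 2n at t = π/2, where m, n are positive integers with m + n = k. Then f(t) ≥ 1 for all t with π ≤ t ≤ 3π/2. -/

import Mathlib

open Real Finset Polynomial
open scoped ContDiff

noncomputable section RakedAux

private lemma natCast_lt_inf (i : ℕ) : (i : WithTop ℕ∞) < ∞ := by
  norm_cast; exact WithTop.coe_lt_top i

private lemma smooth_cast {f : ℝ → ℝ} (h : ContDiff ℝ ∞ f) (i : ℕ) : ContDiff ℝ i f :=
  h.of_le (natCast_lt_inf i).le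

private lemma contDiff_polyeval (p : ℝ[X]) : ContDiff ℝ ∞ fun x : ℝ => p.eval x := by
  refine Polynomial.induction_on' p (fun u v hu hv => ?_) (fun i c => ?_)
  · simpa using hu.add hv
  · simpa [Polynomial.eval_monomial] using (contDiff_const (c := c)).mul (contDiff_id.pow i)

private lemma hasDerivAt_iteratedDeriv {f : ℝ → ℝ} (hf : ContDiff ℝ ∞ f) (i : ℕ) (x : ℝ) :
    HasDerivAt (iteratedDeriv i f) (iteratedDeriv (i + 1) f x) x := by
  have hd : DifferentiableAt ℝ (iteratedDeriv i f) x :=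
    (hf.differentiable_iteratedDeriv i (natCast_lt_inf i)).differentiableAt
  rw [iteratedDeriv_succ]
  exact hd.hasDerivAt

private lemma iteratedDeriv_mul' {u v : ℝ → ℝ} (hu : ContDiff ℝ ∞ u) (hv : ContDiff ℝ ∞ v)
    (n : ℕ) :
    iteratedDeriv n (fun t => u t * v t) = fun t =>
      ∑ i ∈ Finset.range (n + 1),
        (n.choose i : ℝ) * (iteratedDeriv i u t * iteratedDeriv (n - i) v t) := by
  induction n with
  | zero => funext t; simp
  | succ n IH =>
    funext t
    rw [iteratedDeriv_succ, IH]
    have hstep : HasDerivAt (fun t => ∑ i ∈ Finset.range (n + 1),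
        (n.choose i : ℝ) * (iteratedDeriv i u t * iteratedDeriv (n - i) v t))
        (∑ i ∈ Finset.range (n + 1), (n.choose i : ℝ) *
          (iteratedDeriv (i + 1) u t * iteratedDeriv (n - i) v t
            + iteratedDeriv i u t * iteratedDeriv (n - i + 1) v t)) t := by
      refine HasDerivAt.fun_sum fun i _ => ?_
      exact ((hasDerivAt_iteratedDeriv hu i t).mul
        (hasDerivAt_iteratedDeriv hv (n - i) t)).const_mul _
    rw [hstep.deriv]
    have key := Finset.sum_choose_succ_mul
      (fun i j => iteratedDeriv i u t * iteratedDeriv j v t) n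
    simp only [show n + 2 = n + 1 + 1 from rfl] at key
    rw [key, ← Finset.sum_add_distrib]
    refine Finset.sum_congr rfl fun i hi => ?_
    have hle : i ≤ n := Nat.lt_succ_iff.mp (Finset.mem_range.mp hi)
    rw [← Nat.sub_add_comm hle]
    ring

private lemma vanish_of_mul {u ψ : ℝ → ℝ} (hu : ContDiff ℝ ∞ u) (hψ : ContDiff ℝ ∞ ψ)
    {t₀ : ℝ} {d N : ℕ}
    (hu0 : ∀ s < d, iteratedDeriv s u t₀ = 0) (hud : iteratedDeriv d u t₀ ≠ 0)
    (h : ∀ r < N + d, iteratedDeriv r (fun t => u t * ψ t) t₀ = 0) :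
    ∀ r < N, iteratedDeriv r ψ t₀ = 0 := by
  intro r
  induction r using Nat.strong_induction_on with
  | _ r IH =>
    intro hrN
    have h0 := h (r + d) (by omega)
    rw [iteratedDeriv_mul' hu hψ] at h0
    simp only at h0
    rw [Finset.sum_eq_single d] at h0
    · have hrd : r + d - d = r := by omega
      rw [hrd] at h0
      have hC : ((r + d).choose d : ℝ) ≠ 0 :=
        Nat.cast_ne_zero.mpr (Nat.choose_pos (by omega)).ne'
      rcases mul_eq_zero.mp h0 with h' | h'
      · exact absurd h' hC
      rcases mul_eq_zero.mp h' with h'' | h''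
      · exact absurd h'' hud
      · exact h''
    · intro s hs hsd
      rcases Nat.lt_or_ge s d with hlt | hge
      · rw [hu0 s hlt]; ring
      · have hs' := Finset.mem_range.mp hs
        have hgt : d < s := lt_of_le_of_ne hge (Ne.symm hsd)
        rw [IH (r + d - s) (by omega) (by omega)]; ring
    · intro hd
      exact absurd (Finset.mem_range.mpr (by omega)) hd

private lemma iteratedDeriv_cos' (s : ℕ) :
    iteratedDeriv s Real.cos = fun t => Real.cos (t + s * (π / 2)) := by
  induction s with
  | zero => funext t; simp
  | succ s IH =>
    funext t
    rw [iteratedDeriv_succ, IH]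
    have hd : HasDerivAt (fun t : ℝ => Real.cos (t + s * (π / 2)))
        (-Real.sin (t + s * (π / 2))) t := by
      simpa [Function.comp_def] using
        (Real.hasDerivAt_cos (t + s * (π / 2))).comp t ((hasDerivAt_id t).add_const _)
    rw [hd.deriv, show ((s + 1 : ℕ) : ℝ) * (π / 2) = s * (π / 2) + π / 2 by push_cast; ring,
      ← add_assoc, Real.cos_add_pi_div_two]

private lemma iteratedDeriv_const_add' {f : ℝ → ℝ} {r : ℕ} (hr : 0 < r) (c : ℝ) (x : ℝ) :
    iteratedDeriv r (fun t => c + f t) x = iteratedDeriv r f x := by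
  rw [← iteratedDerivWithin_univ, ← iteratedDerivWithin_univ]
  exact iteratedDerivWithin_const_add hr c

private lemma iteratedDeriv_const_sub' {f : ℝ → ℝ} {r : ℕ} (hr : 0 < r) (c : ℝ) (x : ℝ) :
    iteratedDeriv r (fun t => c - f t) x = - iteratedDeriv r f x := by
  rw [← iteratedDerivWithin_univ, ← iteratedDerivWithin_univ,
    iteratedDerivWithin_const_sub hr c]
  exact iteratedDerivWithin_fun_neg f

private lemma iteratedDeriv_cmul' {f : ℝ → ℝ} (hf : ContDiff ℝ ∞ f) (c : ℝ) (r : ℕ) (x : ℝ) :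
    iteratedDeriv r (fun t => c * f t) x = c * iteratedDeriv r f x := by
  rw [← iteratedDerivWithin_univ, ← iteratedDerivWithin_univ]
  exact iteratedDerivWithin_const_mul (Set.mem_univ x) uniqueDiffOn_univ c
    ((smooth_cast hf r).contDiffWithinAt)

private lemma iteratedDeriv_add' {f g : ℝ → ℝ} (hf : ContDiff ℝ ∞ f) (hg : ContDiff ℝ ∞ g)
    (r : ℕ) (x : ℝ) :
    iteratedDeriv r (fun t => f t + g t) x = iteratedDeriv r f x + iteratedDeriv r g x := by
  rw [← iteratedDerivWithin_univ, ← iteratedDerivWithin_univ, ← iteratedDerivWithin_univ]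
  exact iteratedDerivWithin_fun_add (Set.mem_univ x) uniqueDiffOn_univ
    ((smooth_cast hf r).contDiffWithinAt) ((smooth_cast hg r).contDiffWithinAt)

private lemma iteratedDeriv_comp_const_sub' (f : ℝ → ℝ) (c : ℝ) (r : ℕ) (x : ℝ) :
    iteratedDeriv r (fun s => f (c - s)) x = (-1) ^ r * iteratedDeriv r f (c - x) := by
  have h1 : (fun s : ℝ => f (c - s)) = fun s : ℝ => (fun z => f (c + z)) (-s) := by
    funext s; rw [sub_eq_add_neg]
  rw [h1, iteratedDeriv_comp_neg r (fun z => f (c + z)) x,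
    iteratedDeriv_comp_const_add r f c]
  simp [smul_eq_mul, sub_eq_add_neg]

private lemma iteratedDeriv_comp_const_add' (f : ℝ → ℝ) (c : ℝ) (r : ℕ) (x : ℝ) :
    iteratedDeriv r (fun s => f (c + s)) x = iteratedDeriv r f (c + x) := by
  rw [iteratedDeriv_comp_const_add r f c]

private lemma cos_npi (j : ℕ) : Real.cos ((j : ℝ) * π) = (-1) ^ j := by
  simpa using Real.cos_nat_mul_pi_sub 0 j

private lemma cos_odd_shift (j : ℕ) (y : ℝ) :
    Real.cos ((2 * (j : ℝ) + 1) * (y + π)) = - Real.cos ((2 * (j : ℝ) + 1) * y) := by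
  have h : (2 * (j : ℝ) + 1) * (y + π) = ((2 * (j : ℝ) + 1) * y + π) + (j : ℕ) * (2 * π) := by
    push_cast; ring
  rw [h, Real.cos_periodic.nat_mul j _, Real.cos_add_pi]

private lemma sin_odd_shift (j : ℕ) (y : ℝ) :
    Real.sin ((2 * (j : ℝ) + 1) * (y + π)) = - Real.sin ((2 * (j : ℝ) + 1) * y) := by
  have h : (2 * (j : ℝ) + 1) * (y + π) = ((2 * (j : ℝ) + 1) * y + π) + (j : ℕ) * (2 * π) := by
    push_cast; ring
  rw [h, Real.sin_periodic.nat_mul j _, Real.sin_add_pi]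

private lemma cos_odd_reflect (j : ℕ) (y : ℝ) :
    Real.cos ((2 * (j : ℝ) + 1) * (π - y)) = - Real.cos ((2 * (j : ℝ) + 1) * y) := by
  have h : (2 * (j : ℝ) + 1) * (π - y) = (π - (2 * (j : ℝ) + 1) * y) + (j : ℕ) * (2 * π) := by
    push_cast; ring
  rw [h, Real.cos_periodic.nat_mul j _, Real.cos_pi_sub]

private lemma sin_odd_reflect (j : ℕ) (y : ℝ) :
    Real.sin ((2 * (j : ℝ) + 1) * (π - y)) = Real.sin ((2 * (j : ℝ) + 1) * y) := by
  have h : (2 * (j : ℝ) + 1) * (π - y) = (π - (2 * (j : ℝ) + 1) * y) + (j : ℕ) * (2 * π) := by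
    push_cast; ring
  rw [h, Real.sin_periodic.nat_mul j _, Real.sin_pi_sub]

private lemma cos_odd_half_sum (j : ℕ) (t : ℝ) :
    Real.cos ((2 * (j : ℝ) + 1) * (π / 2 - t)) + Real.cos ((2 * (j : ℝ) + 1) * (π / 2 + t)) = 0 := by
  have h1 : (2 * (j : ℝ) + 1) * (π / 2 - t) = ((j : ℝ) * π + π / 2) - (2 * (j : ℝ) + 1) * t := by ring
  have h2 : (2 * (j : ℝ) + 1) * (π / 2 + t) = ((j : ℝ) * π + π / 2) + (2 * (j : ℝ) + 1) * t := by ring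
  rw [h1, h2]
  simp only [Real.cos_sub, Real.cos_add, Real.sin_add, Real.sin_sub, Real.sin_nat_mul_pi,
    cos_npi, Real.cos_pi_div_two, Real.sin_pi_div_two]
  ring

private lemma sin_odd_half_sum (j : ℕ) (t : ℝ) :
    Real.sin ((2 * (j : ℝ) + 1) * (π / 2 - t)) + Real.sin ((2 * (j : ℝ) + 1) * (π / 2 + t))
      = 2 * (-1) ^ j * Real.cos ((2 * (j : ℝ) + 1) * t) := by
  have h1 : (2 * (j : ℝ) + 1) * (π / 2 - t) = ((j : ℝ) * π + π / 2) - (2 * (j : ℝ) + 1) * t := by ring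
  have h2 : (2 * (j : ℝ) + 1) * (π / 2 + t) = ((j : ℝ) * π + π / 2) + (2 * (j : ℝ) + 1) * t := by ring
  rw [h1, h2]
  simp only [Real.cos_sub, Real.cos_add, Real.sin_add, Real.sin_sub, Real.sin_nat_mul_pi,
    cos_npi, Real.cos_pi_div_two, Real.sin_pi_div_two]
  ring
private lemma chebyshev_natDegree_le : ∀ N : ℕ, (Polynomial.Chebyshev.T ℝ (N : ℤ)).natDegree ≤ N := by
  intro N
  induction N using Nat.strong_induction_on with
  | _ N IH =>
    match N with
    | 0 => simp [Polynomial.Chebyshev.T_zero]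
    | 1 => simp [Polynomial.Chebyshev.T_one]
    | (N + 2) =>
      have h := Polynomial.Chebyshev.T_add_two ℝ (N : ℤ)
      rw [show ((N + 2 : ℕ) : ℤ) = (N : ℤ) + 2 by push_cast; ring, h]
      refine le_trans (Polynomial.natDegree_sub_le _ _) (max_le ?_ ?_)
      · refine le_trans (Polynomial.natDegree_mul_le) ?_
        have h1 : (2 * X : ℝ[X]).natDegree ≤ 1 :=
          le_trans Polynomial.natDegree_mul_le (by simp)
        have h2 : (Polynomial.Chebyshev.T ℝ ((N : ℤ) + 1)).natDegree ≤ N + 1 := by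
          rw [show ((N : ℤ) + 1) = ((N + 1 : ℕ) : ℤ) by push_cast; ring]
          exact IH (N + 1) (by omega)
        omega
      · exact le_trans (IH N (by omega)) (by omega)

private lemma pow_X_dvd_of_deriv_vanish : ∀ (j : ℕ) (Q : ℝ[X]),
    (∀ r < j, iteratedDeriv r (fun t => Q.eval (Real.cos t)) (π / 2) = 0) → X ^ j ∣ Q := by
  intro j
  induction j with
  | zero => intro Q _; simp
  | succ j IH =>
    intro Q hQ
    have h0 : Q.eval 0 = 0 := by
      have := hQ 0 (Nat.succ_pos j)
      simpa [Real.cos_pi_div_two] using this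
    obtain ⟨Q₁, rfl⟩ : X ∣ Q :=
      Polynomial.X_dvd_iff.mpr (by rwa [Polynomial.coeff_zero_eq_eval_zero])
    have hψ : ContDiff ℝ ∞ fun t => Q₁.eval (Real.cos t) :=
      (contDiff_polyeval Q₁).comp Real.contDiff_cos
    have hv : ∀ r < j, iteratedDeriv r (fun t => Q₁.eval (Real.cos t)) (π / 2) = 0 := by
      refine vanish_of_mul Real.contDiff_cos hψ (d := 1) ?_ ?_ ?_
      · intro s hs
        have hs0 : s = 0 := by omega
        subst hs0
        simp [Real.cos_pi_div_two]
      · have h1 := congrFun (iteratedDeriv_cos' 1) (π / 2)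
        rw [h1]
        norm_num [add_halves]
      · intro r hr
        have := hQ r (by omega)
        simpa [Polynomial.eval_mul] using this
    rw [pow_succ']
    exact mul_dvd_mul_left X (IH Q₁ hv)

private lemma pow_X_sub_one_dvd_of_deriv_vanish : ∀ (i : ℕ) (Q : ℝ[X]),
    (∀ r < 2 * i, iteratedDeriv r (fun t => Q.eval (Real.cos t)) 0 = 0) → (X - 1) ^ i ∣ Q := by
  intro i
  induction i with
  | zero => intro Q _; simp
  | succ i IH =>
    intro Q hQ
    have h0 : Q.eval 1 = 0 := by
      have := hQ 0 (by omega)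
      simpa [Real.cos_zero] using this
    obtain ⟨Q₁, rfl⟩ : (X - 1 : ℝ[X]) ∣ Q := by
      have := (Polynomial.dvd_iff_isRoot (p := Q) (a := 1)).mpr h0
      simpa using this
    have hψ : ContDiff ℝ ∞ fun t => Q₁.eval (Real.cos t) :=
      (contDiff_polyeval Q₁).comp Real.contDiff_cos
    have hu : ContDiff ℝ ∞ fun t : ℝ => Real.cos t - 1 := Real.contDiff_cos.sub contDiff_const
    have he : (fun t : ℝ => Real.cos t - 1) = fun t : ℝ => (-1 : ℝ) + Real.cos t := by
      funext t; ring
    have hv : ∀ r < 2 * i, iteratedDeriv r (fun t => Q₁.eval (Real.cos t)) 0 = 0 := by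
      refine vanish_of_mul hu hψ (d := 2) ?_ ?_ ?_
      · intro s hs
        match s with
        | 0 => simp
        | 1 =>
          rw [he, iteratedDeriv_const_add' (by omega), congrFun (iteratedDeriv_cos' 1) 0]
          norm_num
      · rw [he, iteratedDeriv_const_add' (by omega), congrFun (iteratedDeriv_cos' 2) 0]
        norm_num [show (0 : ℝ) + 2 * (π / 2) = π by ring]
      · intro r hr
        have := hQ r (by omega)
        simpa [Polynomial.eval_mul] using this
    rw [pow_succ']
    exact mul_dvd_mul_left _ (IH Q₁ hv)
private lemma core (m n : ℕ) (hm : 1 ≤ m) (hn : 1 ≤ n) (c : ℕ → ℝ) (g : ℝ → ℝ)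
    (hg : ∀ t : ℝ, g t = ∑ j ∈ Finset.range (m + n), c j * Real.cos ((2 * (j : ℝ) + 1) * t))
    (h00 : g 0 = -1)
    (h0 : ∀ r, 1 ≤ r → r < 2 * m → iteratedDeriv r g 0 = 0)
    (h1 : ∀ r < 2 * n, iteratedDeriv r g (π / 2) = 0) :
    ∀ t ∈ Set.Icc (0 : ℝ) (π / 2), g t ≤ 0 := by
  set k := m + n with hk
  set P : ℝ[X] := ∑ j ∈ Finset.range k, Polynomial.C (c j) * Polynomial.Chebyshev.T ℝ (2 * j + 1 : ℤ)
    with hPdef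
  have hPg : ∀ t : ℝ, P.eval (Real.cos t) = g t := by
    intro t
    rw [hg, hPdef, Polynomial.eval_finset_sum]
    refine Finset.sum_congr rfl fun j _ => ?_
    rw [Polynomial.eval_mul, Polynomial.eval_C, Polynomial.Chebyshev.T_real_cos]
    norm_num
  have hgfun : g = fun t => P.eval (Real.cos t) := funext fun t => (hPg t).symm
  have hganti : ∀ θ : ℝ, g (θ + π) = - g θ := by
    intro θ
    rw [hg, hg, ← Finset.sum_neg_distrib]
    refine Finset.sum_congr rfl fun j _ => ?_
    rw [cos_odd_shift j θ]; ring
  -- oddness of P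
  have hodd : P.comp (-X) = -P := by
    have hroots : Set.Icc (-1 : ℝ) 1 ⊆ {x | (P.comp (-X) + P).IsRoot x} := by
      intro u hu
      have h1' : Real.cos (Real.arccos u) = u := Real.cos_arccos hu.1 hu.2
      have h2' : Real.cos (Real.arccos u + π) = -u := by rw [Real.cos_add_pi, h1']
      have h3 := hganti (Real.arccos u)
      rw [← hPg, ← hPg, h1', h2'] at h3
      simp only [Set.mem_setOf_eq, Polynomial.IsRoot, Polynomial.eval_add, Polynomial.eval_comp,
        Polynomial.eval_neg, Polynomial.eval_X]
      linarith
    have hz : P.comp (-X) + P = 0 :=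
      Polynomial.eq_zero_of_infinite_isRoot _ ((Set.Icc_infinite (by norm_num)).mono hroots)
    exact eq_neg_of_add_eq_zero_left hz
  have hP0 : P.eval 0 = 0 := by
    have := congrArg (Polynomial.eval 0) hodd
    simp [Polynomial.eval_comp] at this
    linarith
  have hP1 : P.eval 1 = -1 := by
    have := hPg 0
    rw [Real.cos_zero, h00] at this
    exact this
  -- X ^ (2n+1) ∣ P
  have hdvdX : X ^ (2 * n) ∣ P := by
    refine pow_X_dvd_of_deriv_vanish (2 * n) P fun r hr => ?_
    have := h1 r hr
    rwa [hgfun] at this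
  obtain ⟨Q, hQ⟩ := hdvdX
  have hQodd : Q.comp (-X) = -Q := by
    have h2' : (X : ℝ[X]) ^ (2 * n) * Q.comp (-X) = X ^ (2 * n) * (-Q) := by
      have h3 := hodd
      rw [hQ, Polynomial.mul_comp, Polynomial.pow_comp, Polynomial.X_comp] at h3
      rwa [Even.neg_pow ⟨n, by ring⟩ (X : ℝ[X]), ← mul_neg] at h3
    exact mul_left_cancel₀ (pow_ne_zero _ Polynomial.X_ne_zero) h2'
  have hQ0 : Q.eval 0 = 0 := by
    have := congrArg (Polynomial.eval 0) hQodd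
    simp [Polynomial.eval_comp] at this
    linarith
  have hdvdX1 : X ^ (2 * n + 1) ∣ P := by
    obtain ⟨Q₂, hQ₂⟩ : X ∣ Q :=
      Polynomial.X_dvd_iff.mpr (by rwa [Polynomial.coeff_zero_eq_eval_zero])
    exact ⟨Q₂, by rw [hQ, hQ₂, pow_succ]; ring⟩
  -- (X-1)^m ∣ 1 + P
  have hdvd1 : (X - 1 : ℝ[X]) ^ m ∣ (1 + P) := by
    refine pow_X_sub_one_dvd_of_deriv_vanish m (1 + P) fun r hr => ?_
    have he : (fun t => (1 + P).eval (Real.cos t)) = fun t => 1 + g t := by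
      funext t; rw [Polynomial.eval_add, Polynomial.eval_one, hPg]
    rw [he]
    rcases Nat.eq_zero_or_pos r with hr0 | hrpos
    · subst hr0; simp [h00]
    · rw [iteratedDeriv_const_add' hrpos]
      exact h0 r hrpos hr
  -- derivative divisibilities
  have hdvdD1 : (X - 1 : ℝ[X]) ^ (m - 1) ∣ Polynomial.derivative P := by
    obtain ⟨S, hS⟩ := hdvd1
    refine ⟨Polynomial.C (m : ℝ) * S + (X - 1) * Polynomial.derivative S, ?_⟩
    have hder := congrArg Polynomial.derivative hS
    rw [Polynomial.derivative_add, Polynomial.derivative_one, zero_add, Polynomial.derivative_mul,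
      Polynomial.derivative_pow, Polynomial.derivative_sub, Polynomial.derivative_X,
      Polynomial.derivative_one, sub_zero, mul_one] at hder
    rw [hder, show ((X : ℝ[X]) - 1) ^ m = (X - 1) ^ (m - 1) * (X - 1) by
      rw [← pow_succ]; congr 1; omega]
    push_cast
    ring
  have hdvdD2 : (X : ℝ[X]) ^ (2 * n) ∣ Polynomial.derivative P := by
    obtain ⟨Q₂, hQ₂⟩ := hdvdX1
    refine ⟨Polynomial.C ((2 * n + 1 : ℕ) : ℝ) * Q₂ + X * Polynomial.derivative Q₂, ?_⟩
    have hder := congrArg Polynomial.derivative hQ₂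
    rw [Polynomial.derivative_mul, Polynomial.derivative_X_pow] at hder
    rw [hder, show (2 * n + 1) - 1 = 2 * n from rfl, pow_succ]
    push_cast
    ring
  have heven : (Polynomial.derivative P).comp (-X) = Polynomial.derivative P := by
    have hder := congrArg Polynomial.derivative hodd
    rw [Polynomial.derivative_comp, Polynomial.derivative_neg, Polynomial.derivative_X,
      Polynomial.derivative_neg] at hder
    simpa [neg_mul, one_mul, neg_inj] using hder
  have hdvdD3 : ((X : ℝ[X]) + 1) ^ (m - 1) ∣ Polynomial.derivative P := by
    obtain ⟨E, hE⟩ := hdvdD1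
    have h2' : ((-X : ℝ[X]) - 1) ^ (m - 1) ∣ Polynomial.derivative P := by
      refine ⟨E.comp (-X), ?_⟩
      have h3 := congrArg (fun p : ℝ[X] => p.comp (-X)) hE
      simp only [Polynomial.mul_comp, Polynomial.pow_comp, Polynomial.sub_comp,
        Polynomial.X_comp, Polynomial.one_comp] at h3
      rwa [heven] at h3
    refine dvd_trans ⟨(-1 : ℝ[X]) ^ (m - 1), ?_⟩ h2'
    rw [← mul_pow]
    congr 1
    ring
  -- coprimality
  have hcop1 : IsCoprime ((X : ℝ[X]) ^ (2 * n)) ((X - 1) ^ (m - 1)) := by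
    refine IsCoprime.pow ?_
    have := Polynomial.isCoprime_X_sub_C_of_isUnit_sub (R := ℝ) (a := 0) (b := 1)
      (by norm_num)
    simpa using this
  have hcop2 : IsCoprime ((X : ℝ[X]) ^ (2 * n)) ((X + 1) ^ (m - 1)) := by
    refine IsCoprime.pow ?_
    have := Polynomial.isCoprime_X_sub_C_of_isUnit_sub (R := ℝ) (a := 0) (b := -1)
      (by norm_num)
    simpa [sub_neg_eq_add] using this
  have hcop3 : IsCoprime ((X - 1 : ℝ[X]) ^ (m - 1)) ((X + 1) ^ (m - 1)) := by
    refine IsCoprime.pow ?_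
    have := Polynomial.isCoprime_X_sub_C_of_isUnit_sub (R := ℝ) (a := 1) (b := -1)
      (by norm_num)
    simpa [sub_neg_eq_add] using this
  have hD : ((X : ℝ[X]) ^ (2 * n) * (X - 1) ^ (m - 1)) * (X + 1) ^ (m - 1)
      ∣ Polynomial.derivative P :=
    (hcop2.mul_left hcop3).mul_dvd (hcop1.mul_dvd hdvdD2 hdvdD1) hdvdD3
  obtain ⟨W, hW⟩ := hD
  -- degree bookkeeping
  have hdegP : P.natDegree ≤ 2 * k - 1 := by
    rw [hPdef]
    refine Polynomial.natDegree_sum_le_of_forall_le _ _ fun j hj => ?_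
    refine le_trans (Polynomial.natDegree_C_mul_le _ _) ?_
    have hTj : (Polynomial.Chebyshev.T ℝ ((2 * j + 1 : ℕ) : ℤ)).natDegree ≤ 2 * j + 1 :=
      chebyshev_natDegree_le (2 * j + 1)
    have hj' : j < k := Finset.mem_range.mp hj
    have hcast : ((2 * j + 1 : ℕ) : ℤ) = (2 * j + 1 : ℤ) := by push_cast; ring
    rw [hcast] at hTj
    omega
  have hXm1 : (X - 1 : ℝ[X]) ≠ 0 := by
    have := Polynomial.X_sub_C_ne_zero (R := ℝ) 1
    simpa using this
  have hXp1 : (X + 1 : ℝ[X]) ≠ 0 := by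
    have := Polynomial.X_sub_C_ne_zero (R := ℝ) (-1)
    simpa [sub_neg_eq_add] using this
  have hndXm1 : (X - 1 : ℝ[X]).natDegree = 1 := by
    have := Polynomial.natDegree_X_sub_C (1 : ℝ)
    simpa using this
  have hndXp1 : (X + 1 : ℝ[X]).natDegree = 1 := by
    have := Polynomial.natDegree_X_sub_C (-1 : ℝ)
    simpa [sub_neg_eq_add] using this
  have hD0 : ((X : ℝ[X]) ^ (2 * n) * (X - 1) ^ (m - 1)) * (X + 1) ^ (m - 1) ≠ 0 :=
    mul_ne_zero (mul_ne_zero (pow_ne_zero _ Polynomial.X_ne_zero) (pow_ne_zero _ hXm1))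
      (pow_ne_zero _ hXp1)
  have hdegD : (((X : ℝ[X]) ^ (2 * n) * (X - 1) ^ (m - 1)) * (X + 1) ^ (m - 1)).natDegree
      = 2 * k - 2 := by
    rw [Polynomial.natDegree_mul (mul_ne_zero (pow_ne_zero _ Polynomial.X_ne_zero)
        (pow_ne_zero _ hXm1)) (pow_ne_zero _ hXp1),
      Polynomial.natDegree_mul (pow_ne_zero _ Polynomial.X_ne_zero) (pow_ne_zero _ hXm1)]
    simp only [Polynomial.natDegree_pow, Polynomial.natDegree_X_pow, hndXm1, hndXp1,
      Polynomial.natDegree_X]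
    omega
  obtain ⟨w, hWc⟩ : ∃ w : ℝ, W = Polynomial.C w := by
    rcases eq_or_ne W 0 with hW0 | hW0
    · exact ⟨0, by simp [hW0]⟩
    · refine ⟨W.coeff 0, Polynomial.eq_C_of_natDegree_eq_zero ?_⟩
      have hmul := Polynomial.natDegree_mul hD0 hW0
      rw [← hW] at hmul
      have hdegP' : (Polynomial.derivative P).natDegree ≤ 2 * k - 2 :=
        le_trans (Polynomial.natDegree_derivative_le P) (by omega)
      omega
  -- pointwise formula for P'
  have hevalP' : ∀ s : ℝ, (Polynomial.derivative P).eval s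
      = (w * (-1) ^ (m - 1)) * (s ^ (2 * n) * (1 - s ^ 2) ^ (m - 1)) := by
    intro s
    rw [hW, hWc]
    simp only [Polynomial.eval_mul, Polynomial.eval_pow, Polynomial.eval_sub,
      Polynomial.eval_add, Polynomial.eval_one, Polynomial.eval_X, Polynomial.eval_C]
    rw [show s ^ (2 * n) * (s - 1) ^ (m - 1) * (s + 1) ^ (m - 1) * w
        = w * s ^ (2 * n) * (((s - 1) * (s + 1)) ^ (m - 1)) by rw [mul_pow]; ring,
      show (s - 1) * (s + 1) = (-1) * (1 - s ^ 2) by ring, mul_pow]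
    ring
  set w' := w * (-1 : ℝ) ^ (m - 1) with hw'def
  have hFTC : ∀ u : ℝ, P.eval u = w' * ∫ s in (0 : ℝ)..u, s ^ (2 * n) * (1 - s ^ 2) ^ (m - 1) := by
    intro u
    have h1' : ∫ s in (0 : ℝ)..u, (Polynomial.derivative P).eval s = P.eval u - P.eval 0 := by
      refine intervalIntegral.integral_eq_sub_of_hasDerivAt
        (fun x _ => Polynomial.hasDerivAt P x) ?_
      exact ((Polynomial.derivative P).continuous_aeval).intervalIntegrable _ _
    rw [hP0, sub_zero] at h1'
    rw [← h1', intervalIntegral.integral_congr (g := fun s => w' *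
      (s ^ (2 * n) * (1 - s ^ 2) ^ (m - 1))) (fun x _ => hevalP' x),
      intervalIntegral.integral_const_mul]
  have hI1 : 0 < ∫ s in (0 : ℝ)..1, s ^ (2 * n) * (1 - s ^ 2) ^ (m - 1) := by
    refine intervalIntegral.intervalIntegral_pos_of_pos_on ?_ ?_ (by norm_num)
    · refine (Continuous.intervalIntegrable ?_ _ _)
      exact (continuous_pow (2 * n)).mul ((continuous_const.sub (continuous_pow 2)).pow (m - 1))
    · intro x hx
      have hx1 : (0 : ℝ) < x := hx.1
      have hx2 : x < 1 := hx.2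
      have hx3 : (0 : ℝ) < 1 - x ^ 2 := by nlinarith
      exact mul_pos (pow_pos hx1 _) (pow_pos hx3 _)
  have hw'neg : w' < 0 := by
    have h2' := hFTC 1
    rw [hP1] at h2'
    nlinarith
  intro t ht
  rw [← hPg t, hFTC]
  have hct0 : 0 ≤ Real.cos t :=
    Real.cos_nonneg_of_mem_Icc ⟨by linarith [ht.1, Real.pi_pos], ht.2⟩
  have hInn : 0 ≤ ∫ s in (0 : ℝ)..(Real.cos t), s ^ (2 * n) * (1 - s ^ 2) ^ (m - 1) := by
    refine intervalIntegral.integral_nonneg hct0 ?_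
    intro x hx
    have hx1 : (0 : ℝ) ≤ x := hx.1
    have hx2 : x ≤ 1 := le_trans hx.2 (Real.cos_le_one t)
    have hx3 : (0 : ℝ) ≤ 1 - x ^ 2 := by nlinarith
    exact mul_nonneg (pow_nonneg hx1 _) (pow_nonneg hx3 _)
  nlinarith
end RakedAux


theorem raked_ge_one_on_third_quadrant (k m n : ℕ) (hm : 1 ≤ m) (hn : 1 ≤ n)
    (hmn : m + n = k)
    (a b : ℕ → ℝ) (f : ℝ → ℝ)
    (hf : ∀ t : ℝ, f t = 1 + ∑ j ∈ Finset.range k,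
        (a j * Real.cos ((2 * (j : ℝ) + 1) * t) + b j * Real.sin ((2 * (j : ℝ) + 1) * t)))
    (hroot0 : (∀ r < 2 * m, iteratedDeriv r f 0 = 0) ∧ iteratedDeriv (2 * m) f 0 ≠ 0)
    (hroot1 : (∀ r < 2 * n, iteratedDeriv r f (Real.pi / 2) = 0) ∧
      iteratedDeriv (2 * n) f (Real.pi / 2) ≠ 0) :
    ∀ t ∈ Set.Icc Real.pi (3 * Real.pi / 2), 1 ≤ f t := by
  have hsf : ContDiff ℝ ∞ f := by
    have hfe : f = fun t => 1 + ∑ j ∈ Finset.range k,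
        (a j * Real.cos ((2 * (j : ℝ) + 1) * t) + b j * Real.sin ((2 * (j : ℝ) + 1) * t)) :=
      funext hf
    rw [hfe]
    refine contDiff_const.add (ContDiff.sum fun j _ => ContDiff.add ?_ ?_)
    · exact contDiff_const.mul (Real.contDiff_cos.comp (contDiff_const.mul contDiff_id))
    · exact contDiff_const.mul (Real.contDiff_sin.comp (contDiff_const.mul contDiff_id))
  have f0 : f 0 = 0 := by
    have := hroot0.1 0 (by omega); simpa using this
  have fh : f (π / 2) = 0 := by
    have := hroot1.1 0 (by omega); simpa using this
  have hap : ∀ x : ℝ, f (x + π) + f x = 2 := by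
    intro x
    rw [hf (x + π), hf x]
    have hsum : (∑ j ∈ Finset.range k,
          (a j * Real.cos ((2 * (j : ℝ) + 1) * (x + π)) + b j * Real.sin ((2 * (j : ℝ) + 1) * (x + π))))
        + ∑ j ∈ Finset.range k,
          (a j * Real.cos ((2 * (j : ℝ) + 1) * x) + b j * Real.sin ((2 * (j : ℝ) + 1) * x)) = 0 := by
      rw [← Finset.sum_add_distrib]
      refine Finset.sum_eq_zero fun j _ => ?_
      rw [cos_odd_shift, sin_odd_shift]; ring
    linarith
  have fpi : f π = 2 := by
    have := hap 0; rw [zero_add, f0] at this; linarith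
  have hdap : ∀ r : ℕ, 1 ≤ r → iteratedDeriv r f π = - iteratedDeriv r f 0 := by
    intro r hr
    have he : (fun x : ℝ => f (x + π)) = fun x => 2 - f x := by
      funext x; have := hap x; linarith
    have h1 : iteratedDeriv r (fun x : ℝ => f (x + π)) 0 = iteratedDeriv r f π := by
      rw [iteratedDeriv_comp_add_const]; simp
    rw [← h1, he, iteratedDeriv_const_sub' hr]
  have hf0pi : ∀ r, 1 ≤ r → r < 2 * m → iteratedDeriv r f π = 0 := fun r h1 h2 => by
    rw [hdap r h1, hroot0.1 r h2, neg_zero]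
  -- cosine part
  have hsrefl : ContDiff ℝ ∞ fun s : ℝ => f (π - s) := hsf.comp (contDiff_const.sub contDiff_id)
  set g2 : ℝ → ℝ := fun s => (1 / 2 : ℝ) * (f s + (-1) * f (π - s)) with hg2
  have hing : ContDiff ℝ ∞ fun s : ℝ => f s + (-1) * f (π - s) :=
    hsf.add (contDiff_const.mul hsrefl)
  have hg2c : ∀ (r : ℕ) (x : ℝ), iteratedDeriv r g2 x
      = (1 / 2) * (iteratedDeriv r f x + (-1) * ((-1) ^ r * iteratedDeriv r f (π - x))) := by
    intro r x
    rw [hg2, iteratedDeriv_cmul' hing _ r x,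
      iteratedDeriv_add' hsf (contDiff_const.mul hsrefl) r x,
      iteratedDeriv_cmul' hsrefl (-1) r x, iteratedDeriv_comp_const_sub' f π r x]
  have hg2eq : ∀ t : ℝ, g2 t = ∑ j ∈ Finset.range (m + n),
      a j * Real.cos ((2 * (j : ℝ) + 1) * t) := by
    intro t
    rw [hg2]
    simp only
    rw [hf t, hf (π - t), hmn]
    have hA : ∑ j ∈ Finset.range k,
        (a j * Real.cos ((2 * (j : ℝ) + 1) * (π - t)) + b j * Real.sin ((2 * (j : ℝ) + 1) * (π - t)))
        = ∑ j ∈ Finset.range k,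
          (-(a j * Real.cos ((2 * (j : ℝ) + 1) * t)) + b j * Real.sin ((2 * (j : ℝ) + 1) * t)) :=
      Finset.sum_congr rfl fun j _ => by rw [cos_odd_reflect, sin_odd_reflect]; ring
    rw [hA]
    have hS : ∑ j ∈ Finset.range k,
          (a j * Real.cos ((2 * (j : ℝ) + 1) * t) + b j * Real.sin ((2 * (j : ℝ) + 1) * t))
        - ∑ j ∈ Finset.range k,
          (-(a j * Real.cos ((2 * (j : ℝ) + 1) * t)) + b j * Real.sin ((2 * (j : ℝ) + 1) * t))
        = 2 * ∑ j ∈ Finset.range k, a j * Real.cos ((2 * (j : ℝ) + 1) * t) := by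
      rw [← Finset.sum_sub_distrib, Finset.mul_sum]
      exact Finset.sum_congr rfl fun j _ => by ring
    linarith
  have hcore1 := core m n hm hn a g2 hg2eq
    (by rw [hg2]; simp only; rw [sub_zero, f0, fpi]; norm_num)
    (by
      intro r h1 h2
      rw [hg2c r 0, sub_zero, hroot0.1 r h2, hf0pi r h1 h2]
      ring)
    (by
      intro r hr
      rw [hg2c r (π / 2), show π - π / 2 = π / 2 by ring, hroot1.1 r hr]
      ring)
  -- sine part
  have hsr2 : ContDiff ℝ ∞ fun s : ℝ => f (π / 2 - s) := hsf.comp (contDiff_const.sub contDiff_id)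
  have hsr3 : ContDiff ℝ ∞ fun s : ℝ => f (π / 2 + s) := hsf.comp (contDiff_const.add contDiff_id)
  set h2 : ℝ → ℝ := fun s => (-1 : ℝ) + (1 / 2) * (f (π / 2 - s) + f (π / 2 + s)) with hh2
  have hinh : ContDiff ℝ ∞ fun s : ℝ => f (π / 2 - s) + f (π / 2 + s) := hsr2.add hsr3
  have hh2c : ∀ (r : ℕ), 1 ≤ r → ∀ (x : ℝ), iteratedDeriv r h2 x
      = (1 / 2) * ((-1) ^ r * iteratedDeriv r f (π / 2 - x) + iteratedDeriv r f (π / 2 + x)) := by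
    intro r hr x
    rw [hh2, iteratedDeriv_const_add' hr, iteratedDeriv_cmul' hinh _ r x,
      iteratedDeriv_add' hsr2 hsr3 r x, iteratedDeriv_comp_const_sub' f (π / 2) r x,
      iteratedDeriv_comp_const_add' f (π / 2) r x]
  have hh2eq : ∀ t : ℝ, h2 t = ∑ j ∈ Finset.range (n + m),
      ((-1) ^ j * b j) * Real.cos ((2 * (j : ℝ) + 1) * t) := by
    intro t
    rw [hh2]
    simp only
    rw [hf (π / 2 - t), hf (π / 2 + t), show n + m = k by omega]
    have hS : ∑ j ∈ Finset.range k,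
          (a j * Real.cos ((2 * (j : ℝ) + 1) * (π / 2 - t)) + b j * Real.sin ((2 * (j : ℝ) + 1) * (π / 2 - t)))
        + ∑ j ∈ Finset.range k,
          (a j * Real.cos ((2 * (j : ℝ) + 1) * (π / 2 + t)) + b j * Real.sin ((2 * (j : ℝ) + 1) * (π / 2 + t)))
        = 2 * ∑ j ∈ Finset.range k, ((-1) ^ j * b j) * Real.cos ((2 * (j : ℝ) + 1) * t) := by
      rw [← Finset.sum_add_distrib, Finset.mul_sum]
      refine Finset.sum_congr rfl fun j _ => ?_
      have hc := cos_odd_half_sum j t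
      have hs := sin_odd_half_sum j t
      linear_combination a j * hc + b j * hs
    linarith
  have hcore2 := core n m hn hm (fun j => (-1) ^ j * b j) h2 hh2eq
    (by rw [hh2]; simp only; rw [sub_zero, add_zero, fh]; norm_num)
    (by
      intro r h1 h2'
      rw [hh2c r h1 0, sub_zero, add_zero, hroot1.1 r h2']
      ring)
    (by
      intro r hr
      rcases Nat.eq_zero_or_pos r with hr0 | hrpos
      · subst hr0
        simp only [iteratedDeriv_zero]
        rw [hh2]
        simp only
        rw [sub_self, add_halves, f0, fpi]
        norm_num
      · rw [hh2c r hrpos (π / 2), sub_self, add_halves, hroot0.1 r hr, hf0pi r hrpos hr]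
        ring)
  -- conclusion
  intro t ht
  obtain ⟨ht1, ht2⟩ := ht
  set s : ℝ := t - π with hsdef
  have hs1 : 0 ≤ s := by simp [hsdef]; linarith
  have hs2 : s ≤ π / 2 := by rw [hsdef]; linarith
  have hfs : f t = 2 - f s := by
    have := hap s
    rw [show s + π = t by rw [hsdef]; ring] at this
    linarith
  have hA := hcore1 s ⟨hs1, hs2⟩
  have hB := hcore2 (π / 2 - s) ⟨by linarith, by linarith⟩
  have hkey : g2 s + h2 (π / 2 - s) = f s - 1 := by
    rw [hg2, hh2]
    simp only
    rw [show π / 2 - (π / 2 - s) = s by ring, show π / 2 + (π / 2 - s) = π - s by ring]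
    ring
  rw [hfs]
  linarith
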